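/- arXiv:1310.5456 — 9 statements merged into one kernel-verified Lean document; each statement's English description precedes it below -/
import Mathlib

section
/- Every tree admits a weakly k-uniform integer additive set-indexer for every positive integer k. -/
open Pointwise

/-- The induced edge labeling: the sumset of the labels of the endpoints. -/
def edgeSum {V : Type*} (f : V → Finset ℕ) : Sym2 V → Finset ℕ :=
  Sym2.lift ⟨fun u v => f u + f v, fun u v => by simp [add_comm]⟩

/-- An integer additive set-indexer: an injective labeling of the vertices by
finite nonempty sets of naturals whose induced edge labeling is injective on edges. -/
def IsIASI {V : Type*} (G : SimpleGraph V) (f : V → Finset ℕ) : Prop :=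
  Function.Injective f ∧ (∀ v, (f v).Nonempty) ∧
    ∀ e₁ ∈ G.edgeSet, ∀ e₂ ∈ G.edgeSet, edgeSum f e₁ = edgeSum f e₂ → e₁ = e₂

/-- A `k`-uniform IASI: every edge has set-indexing number `k`. -/
def IsUniformIASI {V : Type*} (G : SimpleGraph V) (f : V → Finset ℕ) (k : ℕ) : Prop :=
  IsIASI G f ∧ ∀ u v, G.Adj u v → (f u + f v).card = k

/-- A weakly `k`-uniform IASI: a `k`-uniform IASI assigning only singleton sets
and `k`-element sets to the vertices. -/
def IsWeaklyUniformIASI {V : Type*} (G : SimpleGraph V) (f : V → Finset ℕ) (k : ℕ) : Prop :=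
  IsUniformIASI G f k ∧ ∀ v, (f v).card = 1 ∨ (f v).card = k

lemma tree_coloring {V : Type*} (G : SimpleGraph V) (hG : G.IsTree) :
    ∃ c : V → Bool, ∀ u v, G.Adj u v → c u ≠ c v := by
  classical
  have hconn := hG.isConnected
  have hac := hG.IsAcyclic
  obtain ⟨r⟩ := hconn.nonempty
  have hreach : ∀ v, G.Reachable r v := fun v => hconn.preconnected r v
  let P : ∀ v, G.Path r v := fun v => ((hreach v).some).toPath
  have key : ∀ u v, G.Adj u v →
      (P v).1.length = (P u).1.length + 1 ∨ (P u).1.length = (P v).1.length + 1 := by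
    intro u v h
    obtain ⟨p, hp⟩ := P u
    by_cases hv : v ∈ p.support
    · right
      have hp1 : (p.takeUntil v hv).IsPath := hp.takeUntil hv
      have hp2 : (p.dropUntil v hv).IsPath := hp.dropUntil hv
      have hsingle : (SimpleGraph.Walk.cons h.symm SimpleGraph.Walk.nil : G.Walk v u).IsPath := by
        simp [SimpleGraph.Walk.isPath_def, h.ne']
      have h2 : p.dropUntil v hv = SimpleGraph.Walk.cons h.symm SimpleGraph.Walk.nil := by
        have := hac.path_unique ⟨p.dropUntil v hv, hp2⟩ ⟨_, hsingle⟩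
        exact congrArg Subtype.val this
      have hPv : P v = ⟨p.takeUntil v hv, hp1⟩ := hac.path_unique _ _
      have hlen : (p.takeUntil v hv).length + (p.dropUntil v hv).length = p.length := by
        have := congrArg SimpleGraph.Walk.length (p.take_spec hv)
        rwa [SimpleGraph.Walk.length_append] at this
      rw [hPv]
      simp only [h2, SimpleGraph.Walk.length_cons, SimpleGraph.Walk.length_nil] at hlen
      dsimp only
      omega
    · left
      have hq : (p.append (SimpleGraph.Walk.cons h SimpleGraph.Walk.nil)).IsPath := by
        rw [SimpleGraph.Walk.isPath_def, SimpleGraph.Walk.support_append]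
        simp only [SimpleGraph.Walk.support_cons, SimpleGraph.Walk.support_nil, List.tail_cons]
        rw [List.nodup_append]
        refine ⟨hp.support_nodup, List.nodup_singleton v, ?_⟩
        simp only [List.Disjoint, List.mem_singleton]
        intro a ha hav
        intro hb hab; subst hb; subst hab; exact hv ha
      have hPv : P v = ⟨_, hq⟩ := hac.path_unique _ _
      rw [hPv]
      dsimp only
      simp [SimpleGraph.Walk.length_append]
  refine ⟨fun v => decide ((P v).1.length % 2 = 1), fun u v h => ?_⟩
  have := key u v h
  simp only [ne_eq, decide_eq_decide]
  omega

theorem tree_weakly_uniform_IASI {V : Type*} [Fintype V] (G : SimpleGraph V)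
    (hG : G.IsTree) (k : ℕ) (hk : 0 < k) :
    ∃ f : V → Finset ℕ, IsWeaklyUniformIASI G f k := by
  classical
  obtain ⟨c, hc⟩ := tree_coloring G hG
  have bool1 : ∀ x y : Bool, x ≠ y → x = true → y = false := by decide
  have bool2 : ∀ x y : Bool, x ≠ y → x = false → y = true := by decide
  obtain ⟨n, idx, hidx_lt, hidx_inj⟩ :
      ∃ (n : ℕ) (idx : V → ℕ), (∀ v, idx v < n) ∧ Function.Injective idx := by
    refine ⟨Fintype.card V, fun v => (Fintype.equivFin V v : ℕ), fun v => (Fintype.equivFin V v).2,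
      fun a b h => (Fintype.equivFin V).injective (Fin.ext h)⟩
  set f : V → Finset ℕ := fun v =>
    if c v then {(idx v + 1) * (n + 1)} else Finset.Ico (idx v + 1) (idx v + 1 + k) with hf
  have hfA : ∀ v, c v = true → f v = {(idx v + 1) * (n + 1)} := by
    intro v hv; simp [hf, hv]
  have hfB : ∀ v, c v = false → f v = Finset.Ico (idx v + 1) (idx v + 1 + k) := by
    intro v hv; simp [hf, hv]
  clear_value f
  clear hf
  have hcard : ∀ v, (f v).card = 1 ∨ (f v).card = k := by
    intro v
    cases hv : c v
    · right; rw [hfB v hv]; simp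
    · left; rw [hfA v hv]; simp
  have hne : ∀ v, (f v).Nonempty := by
    intro v
    rcases hcard v with h | h <;> (apply Finset.card_pos.mp; omega)
  have decode : ∀ i j i' j' : ℕ, j < n → j' < n →
      (i + 1) * (n + 1) + (j + 1) = (i' + 1) * (n + 1) + (j' + 1) → i = i' ∧ j = j' := by
    intro i j i' j' hj hj' h
    have hm : ((i + 1) * (n + 1) + (j + 1)) % (n + 1) = j + 1 := by
      rw [mul_comm, Nat.mul_add_mod]
      exact Nat.mod_eq_of_lt (by omega)
    have hm' : ((i' + 1) * (n + 1) + (j' + 1)) % (n + 1) = j' + 1 := by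
      rw [mul_comm, Nat.mul_add_mod]
      exact Nat.mod_eq_of_lt (by omega)
    have hjj : j = j' := by rw [h] at hm; omega
    subst hjj
    have h2 : (i + 1) * (n + 1) = (i' + 1) * (n + 1) := by omega
    have := Nat.eq_of_mul_eq_mul_right (show 0 < n + 1 by omega) h2
    omega
  have hf_inj : Function.Injective f := by
    intro u v h
    cases hu : c u <;> cases hv : c v
    · rw [hfB u hu, hfB v hv] at h
      have h1 : idx u + 1 ∈ Finset.Ico (idx v + 1) (idx v + 1 + k) := by
        rw [← h]; simp only [Finset.mem_Ico]; omega
      have h2 : idx v + 1 ∈ Finset.Ico (idx u + 1) (idx u + 1 + k) := by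
        rw [h]; simp only [Finset.mem_Ico]; omega
      simp only [Finset.mem_Ico] at h1 h2
      exact hidx_inj (by omega)
    · exfalso
      rw [hfB u hu, hfA v hv] at h
      have hmem : idx u + 1 ∈ ({(idx v + 1) * (n + 1)} : Finset ℕ) := by
        rw [← h]; simp only [Finset.mem_Ico]; omega
      simp only [Finset.mem_singleton] at hmem
      have := hidx_lt u
      nlinarith
    · exfalso
      rw [hfA u hu, hfB v hv] at h
      have hmem : idx v + 1 ∈ ({(idx u + 1) * (n + 1)} : Finset ℕ) := by
        rw [h]; simp only [Finset.mem_Ico]; omega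
      simp only [Finset.mem_singleton] at hmem
      have := hidx_lt v
      nlinarith
    · rw [hfA u hu, hfA v hv] at h
      have := Finset.singleton_injective h
      have := Nat.eq_of_mul_eq_mul_right (show 0 < n + 1 by omega) this
      exact hidx_inj (by omega)
  have hsum : ∀ u v, c u = true → c v = false →
      f u + f v = Finset.Ico ((idx u + 1) * (n + 1) + (idx v + 1))
        ((idx u + 1) * (n + 1) + (idx v + 1) + k) := by
    intro u v hu hv
    rw [hfA u hu, hfB v hv]
    ext x
    simp only [Finset.mem_add, Finset.mem_singleton, Finset.mem_Ico]
    constructor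
    · rintro ⟨y, hy, z, hz, rfl⟩
      omega
    · intro hx
      exact ⟨(idx u + 1) * (n + 1), rfl, x - (idx u + 1) * (n + 1), by omega, by omega⟩
  have hkey : ∀ a b a' b' : V, G.Adj a b → G.Adj a' b' → c a = true → c a' = true →
      f a + f b = f a' + f b' → s(a, b) = s(a', b') := by
    intro a b a' b' hab hab' hca hca' h
    have hcb : c b = false := bool1 _ _ (hc a b hab) hca
    have hcb' : c b' = false := bool1 _ _ (hc a' b' hab') hca'
    rw [hsum a b hca hcb, hsum a' b' hca' hcb'] at h
    have hmem : (idx a + 1) * (n + 1) + (idx b + 1) ∈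
        Finset.Ico ((idx a' + 1) * (n + 1) + (idx b' + 1))
          ((idx a' + 1) * (n + 1) + (idx b' + 1) + k) := by
      rw [← h]; simp only [Finset.mem_Ico]; omega
    have hmem' : (idx a' + 1) * (n + 1) + (idx b' + 1) ∈
        Finset.Ico ((idx a + 1) * (n + 1) + (idx b + 1))
          ((idx a + 1) * (n + 1) + (idx b + 1) + k) := by
      rw [h]; simp only [Finset.mem_Ico]; omega
    simp only [Finset.mem_Ico] at hmem hmem'
    have heq : (idx a + 1) * (n + 1) + (idx b + 1) = (idx a' + 1) * (n + 1) + (idx b' + 1) := by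
      omega
    obtain ⟨h1, h2⟩ := decode _ _ _ _ (hidx_lt b) (hidx_lt b') heq
    rw [hidx_inj h1, hidx_inj h2]
  have hes : ∀ u v : V, edgeSum f s(u, v) = f u + f v := fun u v => rfl
  refine ⟨f, ⟨⟨hf_inj, hne, ?_⟩, ?_⟩, hcard⟩
  · intro e₁ he₁ e₂ he₂
    induction e₁ using Sym2.ind with
    | _ a b =>
    induction e₂ using Sym2.ind with
    | _ a' b' =>
    rw [SimpleGraph.mem_edgeSet] at he₁ he₂
    rw [hes, hes]
    intro h
    cases hca : c a <;> cases hca' : c a'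
    · have hcb : c b = true := bool2 _ _ (hc a b he₁) hca
      have hcb' : c b' = true := bool2 _ _ (hc a' b' he₂) hca'
      have := hkey b a b' a' he₁.symm he₂.symm hcb hcb'
        (by rw [add_comm (f b), add_comm (f b')]; exact h)
      rw [Sym2.eq_swap, this, Sym2.eq_swap]
    · have hcb : c b = true := bool2 _ _ (hc a b he₁) hca
      have := hkey b a a' b' he₁.symm he₂ hcb hca'
        (by rw [add_comm (f b)]; exact h)
      rw [Sym2.eq_swap, this]
    · have hcb' : c b' = true := bool2 _ _ (hc a' b' he₂) hca'
      have := hkey a b b' a' he₁ he₂.symm hca hcb'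
        (by rw [add_comm (f b')]; exact h)
      rw [this, Sym2.eq_swap]
    · exact hkey a b a' b' he₁ he₂ hca hca' h
  · intro u v huv
    cases hca : c u
    · have hcb : c v = true := bool2 _ _ (hc u v huv) hca
      rw [add_comm, hsum v u hcb hca]
      simp
    · have hcb : c v = false := bool1 _ _ (hc u v huv) hca
      rw [hsum u v hca hcb]
      simp
end

section
/- Every even cycle C_{2n} admits a weakly k-uniform integer additive set-indexer for every positive integer k. -/
open Pointwise

lemma Icc_add_Icc_nat (a b c d : ℕ) (hab : a ≤ b) (hcd : c ≤ d) :
    Finset.Icc a b + Finset.Icc c d = Finset.Icc (a + c) (b + d) := by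
  ext x
  simp only [Finset.mem_add, Finset.mem_Icc]
  constructor
  · rintro ⟨y, hy, z, hz, rfl⟩; omega
  · intro hx
    exact ⟨min b (max a (x - d)), by omega, x - min b (max a (x - d)), by omega, by omega⟩

lemma mod_succ_eq_iff {N p q : ℕ} (hq : q < N) (hN : 0 < N) :
    p = (q + 1) % N ↔ ((q + 1 < N ∧ p = q + 1) ∨ (q = N - 1 ∧ p = 0)) := by
  rcases Nat.lt_or_ge (q + 1) N with h | h
  · rw [Nat.mod_eq_of_lt h]; omega
  · have : q + 1 = N := by omega
    rw [this, Nat.mod_self]; omega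

theorem even_cycle_weakly_uniform_IASI (n : ℕ) (hn : 2 ≤ n) (k : ℕ) (hk : 0 < k) :
    ∃ f : Fin (2 * n) → Finset ℕ, IsWeaklyUniformIASI (SimpleGraph.cycleGraph (2 * n)) f k := by
  set N := 2 * n with hNdef
  have hN4 : 4 ≤ N := by omega
  -- vertex weights
  set a : Fin N → ℕ := fun v => if v.val = N - 1 then 2 * N else v.val with ha
  set wt : Fin N → ℕ := fun v => if v.val % 2 = 0 then 1 else k with hwt
  have hwt1 : ∀ v, 1 ≤ wt v := by
    intro v; simp only [hwt]; split <;> omega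
  set f : Fin N → Finset ℕ := fun v => Finset.Icc (a v) (a v + wt v - 1) with hf
  have hfmem : ∀ v, a v ∈ f v := by
    intro v; simp only [hf, hwt, Finset.mem_Icc]
    split_ifs <;> omega
  have hainj : ∀ u v : Fin N, a u = a v → u = v := by
    intro u v h
    have hu := u.isLt; have hv := v.isLt
    apply Fin.ext
    simp only [ha] at h
    split_ifs at h <;> omega
  -- adjacency in numeric form
  haveI : NeZero N := ⟨by omega⟩
  have hone : (1 : Fin N).val = 1 := by
    rw [Fin.val_one']; exact Nat.mod_eq_of_lt (by omega)
  have hadj : ∀ u v : Fin N, (SimpleGraph.cycleGraph N).Adj u v →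
      (u.val = (v.val + 1) % N ∨ v.val = (u.val + 1) % N) := by
    intro u v h
    rw [SimpleGraph.cycleGraph_adj'] at h
    rcases h with h | h
    · left
      have h1 : u - v = 1 := by apply Fin.ext; rw [h, hone]
      have h2 : u = v + 1 := by rwa [sub_eq_iff_eq_add'] at h1
      rw [h2, Fin.val_add, hone]
    · right
      have h1 : v - u = 1 := by apply Fin.ext; rw [h, hone]
      have h2 : v = u + 1 := by rwa [sub_eq_iff_eq_add'] at h1
      rw [h2, Fin.val_add, hone]
  -- adjacent vertices have opposite parities, so edge sumsets have card k
  have hwtsum : ∀ u v : Fin N, (SimpleGraph.cycleGraph N).Adj u v → wt u + wt v = k + 1 := by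
    intro u v h
    have := hadj u v h
    have hu := u.isLt; have hv := v.isLt
    have hpar : u.val % 2 ≠ v.val % 2 := by
      rcases this with h' | h'
      · rw [mod_succ_eq_iff hv (by omega)] at h'; omega
      · rw [mod_succ_eq_iff hu (by omega)] at h'; omega
    simp only [hwt]
    split_ifs <;> omega
  have hedge : ∀ u v : Fin N, (SimpleGraph.cycleGraph N).Adj u v →
      f u + f v = Finset.Icc (a u + a v) (a u + a v + k - 1) := by
    intro u v h
    simp only [hf]
    rw [Icc_add_Icc_nat _ _ _ _ (by have := hwt1 u; omega) (by have := hwt1 v; omega)]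
    congr 1
    have := hwtsum u v h
    have h1 := hwt1 u; have h2 := hwt1 v
    omega
  -- edge sums determine the edge
  have hkey : ∀ u v x y : Fin N, (SimpleGraph.cycleGraph N).Adj u v →
      (SimpleGraph.cycleGraph N).Adj x y → a u + a v = a x + a y →
      (u = x ∧ v = y) ∨ (u = y ∧ v = x) := by
    intro u v x y huv hxy hsum
    have h1 := hadj u v huv
    have h2 := hadj x y hxy
    have hu := u.isLt; have hv := v.isLt; have hx := x.isLt; have hy := y.isLt
    rw [mod_succ_eq_iff hv (by omega), mod_succ_eq_iff hu (by omega)] at h1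
    rw [mod_succ_eq_iff hy (by omega), mod_succ_eq_iff hx (by omega)] at h2
    simp only [ha] at hsum
    have hvals : (u.val = x.val ∧ v.val = y.val) ∨ (u.val = y.val ∧ v.val = x.val) := by
      split_ifs at hsum <;> omega
    rcases hvals with ⟨e1, e2⟩ | ⟨e1, e2⟩
    · exact Or.inl ⟨Fin.ext e1, Fin.ext e2⟩
    · exact Or.inr ⟨Fin.ext e1, Fin.ext e2⟩
  refine ⟨f, ⟨⟨?_, ?_, ?_⟩, ?_⟩, ?_⟩
  · -- injective
    intro u v h
    apply hainj
    have h1 : a u ∈ f v := h ▸ hfmem u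
    have h2 : a v ∈ f u := h.symm ▸ hfmem v
    simp only [hf, Finset.mem_Icc] at h1 h2
    omega
  · -- nonempty
    intro v
    exact ⟨a v, hfmem v⟩
  · -- edge injectivity
    intro e₁ he₁ e₂ he₂ heq
    induction e₁ using Sym2.ind with | _ u v =>
    induction e₂ using Sym2.ind with | _ x y =>
    rw [SimpleGraph.mem_edgeSet] at he₁ he₂
    simp only [edgeSum, Sym2.lift_mk] at heq
    rw [hedge u v he₁, hedge x y he₂] at heq
    have hmem1 : a u + a v ∈ Finset.Icc (a x + a y) (a x + a y + k - 1) := by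
      rw [← heq]; rw [Finset.mem_Icc]; omega
    have hmem2 : a x + a y ∈ Finset.Icc (a u + a v) (a u + a v + k - 1) := by
      rw [heq]; rw [Finset.mem_Icc]; omega
    rw [Finset.mem_Icc] at hmem1 hmem2
    have hsum : a u + a v = a x + a y := by omega
    rcases hkey u v x y he₁ he₂ hsum with ⟨rfl, rfl⟩ | ⟨rfl, rfl⟩
    · rfl
    · exact Sym2.eq_swap
  · -- uniform: edges have card k
    intro u v h
    rw [hedge u v h, Nat.card_Icc]
    omega
  · -- weakly uniform: vertex cards
    intro v
    simp only [hf, Nat.card_Icc]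
    have := hwt1 v
    simp only [hwt]
    split_ifs <;> omega
end

section
/- For k > 1, no odd cycle C_{2m+1} admits a weakly k-uniform integer additive set-indexer. -/
open Pointwise

theorem odd_cycle_no_weakly_uniform_IASI (m : ℕ) (hm : 1 ≤ m) (k : ℕ) (hk : 1 < k) :
    ¬ ∃ f : Fin (2 * m + 1) → Finset ℕ,
      IsWeaklyUniformIASI (SimpleGraph.cycleGraph (2 * m + 1)) f k := by
  rintro ⟨f, ⟨⟨⟨hinj, hne, _⟩, hunif⟩, hcard⟩⟩
  have hadj : ∀ i : Fin (2 * m + 1), (SimpleGraph.cycleGraph (2 * m + 1)).Adj i (i + 1) := by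
    intro i
    rw [SimpleGraph.cycleGraph_adj']
    right
    have : (i + 1 - i : Fin (2 * m + 1)) = 1 := by open Fin.CommRing in ring
    rw [this]
    have h2 : 1 < 2 * m + 1 := by omega
    simp [Fin.val_one', Nat.mod_eq_of_lt h2]
  have key : ∀ u v, (SimpleGraph.cycleGraph (2 * m + 1)).Adj u v →
      ((f u).card = 1 ↔ ¬ (f v).card = 1) := by
    intro u v huv
    have hcardk := hunif u v huv
    have hu := hcard u; have hv := hcard v
    constructor
    · intro h1 hv1
      have hle : (f u + f v).card ≤ (f u).card * (f v).card := Finset.card_add_le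
      rw [h1, hv1, hcardk] at hle
      omega
    · intro hv1
      rcases hu with h | h
      · exact h
      · exfalso
        rcases hv with h' | h'
        · exact hv1 h'
        · have hcd := cauchy_davenport_add_of_linearOrder_isCancelAdd (hne u) (hne v)
          rw [h, h', hcardk] at hcd
          omega
  set c : Fin (2 * m + 1) → Bool := fun i => decide ((f i).card = 1) with hc
  have hflip : ∀ i : Fin (2 * m + 1), c (i + 1) = ! c i := by
    intro i
    have h := key i (i + 1) (hadj i)
    simp only [hc]
    by_cases h1 : (f i).card = 1
    · simp [h1, h.mp h1]
    · simp [h1, not_not.mp (fun hx => h1 (h.mpr hx))]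
  open Fin.NatCast Fin.CommRing in
  have hiter : ∀ n : ℕ, c ((n : Fin (2 * m + 1))) = Bool.xor (decide (n % 2 = 1)) (c 0) := by
    intro n
    induction n with
    | zero => simp
    | succ n ih =>
      have hcast : ((n + 1 : ℕ) : Fin (2 * m + 1)) = (n : Fin (2 * m + 1)) + 1 := by
        push_cast; ring
      rw [hcast, hflip, ih]
      rcases Nat.even_or_odd n with he | ho
      · have h1 : n % 2 = 0 := Nat.even_iff.mp he
        have h2 : (n + 1) % 2 = 1 := by omega
        simp [h1, h2]
      · have h1 : n % 2 = 1 := Nat.odd_iff.mp ho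
        have h2 : (n + 1) % 2 = 0 := by omega
        simp [h1, h2]
  have h1 := hiter (2 * m + 1)
  open Fin.NatCast in
  have h2 : ((2 * m + 1 : ℕ) : Fin (2 * m + 1)) = 0 := by
    simp [Fin.natCast_self]
  have h3 : (2 * m + 1) % 2 = 1 := by omega
  rw [h2, h3] at h1
  simp at h1
end

section
/- For any positive integer k, every bipartite graph admits a weakly k-uniform integer additive set-indexer. -/
open Pointwise

lemma singleton_add_Ico' (a b c : ℕ) :
    ({a} : Finset ℕ) + Finset.Ico b c = Finset.Ico (a + b) (a + c) := by
  ext x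
  simp only [Finset.mem_add, Finset.mem_singleton, Finset.mem_Ico]
  constructor
  · rintro ⟨y, rfl, z, hz, rfl⟩; omega
  · intro h; exact ⟨a, rfl, x - a, by omega, by omega⟩

lemma decode' {N a₁ a₂ b₁ b₂ : ℕ} (h₁ : a₁ < N) (h₂ : a₂ < N)
    (h : a₁ + N * b₁ = a₂ + N * b₂) : a₁ = a₂ ∧ b₁ = b₂ := by
  have ha : a₁ = a₂ := by
    have := congrArg (· % N) h
    simpa [Nat.add_mul_mod_self_left, Nat.mod_eq_of_lt h₁, Nat.mod_eq_of_lt h₂] using this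
  subst ha
  refine ⟨rfl, ?_⟩
  have hN : 0 < N := lt_of_le_of_lt (Nat.zero_le _) h₁
  exact Nat.eq_of_mul_eq_mul_left hN (Nat.add_left_cancel h)

lemma ico_eq_ico' {p q k : ℕ} (hk : 0 < k)
    (h : Finset.Ico p (p + k) = Finset.Ico q (q + k)) : p = q := by
  have h1 : p ∈ Finset.Ico q (q + k) := h ▸ Finset.mem_Ico.2 ⟨le_rfl, by omega⟩
  have h2 : q ∈ Finset.Ico p (p + k) := h ▸ Finset.mem_Ico.2 ⟨le_rfl, by omega⟩
  simp only [Finset.mem_Ico] at h1 h2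
  omega

theorem bipartite_weakly_uniform_IASI {V : Type*} [Fintype V] (G : SimpleGraph V)
    (hG : G.Colorable 2) (k : ℕ) (hk : 0 < k) :
    ∃ f : V → Finset ℕ, IsWeaklyUniformIASI G f k := by
  classical
  obtain ⟨c⟩ := hG
  set N := Fintype.card V + 1 with hN
  set ι : V → ℕ := fun v => (Fintype.equivFin V v : ℕ) with hι
  have hιinj : Function.Injective ι := by
    intro a b h
    exact (Fintype.equivFin V).injective (Fin.ext h)
  have hιlt : ∀ v, ι v + 1 < N := by
    intro v
    have h := (Fintype.equivFin V v).isLt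
    simp only [hι, hN]
    omega
  have hNpos : 0 < N := by omega
  have hNle : ∀ v, N ≤ N * (ι v + 1) := by
    intro v
    calc N = N * 1 := (mul_one N).symm
      _ ≤ N * (ι v + 1) := Nat.mul_le_mul_left N (by omega)
  set f : V → Finset ℕ := fun v =>
    if c v = 0 then {ι v + 1}
    else Finset.Ico (N * (ι v + 1)) (N * (ι v + 1) + k) with hf
  have fin2 : ∀ x : Fin 2, x = 0 ∨ x = 1 := by decide
  have f0 : ∀ v, c v = 0 → f v = {ι v + 1} := by
    intro v h; simp only [hf, if_pos h]
  have f1 : ∀ v, c v = 1 → f v = Finset.Ico (N * (ι v + 1)) (N * (ι v + 1) + k) := by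
    intro v h
    have : c v ≠ 0 := by rw [h]; exact one_ne_zero
    simp only [hf, if_neg this]
  -- canonical form of edge sums
  have key : ∀ u v, G.Adj u v → ∃ a b : V, s(u, v) = s(a, b) ∧ c a = 0 ∧ c b = 1 ∧
      f u + f v = Finset.Ico ((ι a + 1) + N * (ι b + 1)) ((ι a + 1) + N * (ι b + 1) + k) := by
    intro u v huv
    have hne : c u ≠ c v := c.valid huv
    rcases fin2 (c u) with h0 | h1
    · have h1v : c v = 1 := by
        rcases fin2 (c v) with h | h
        · exact absurd (h0.trans h.symm) hne
        · exact h
      refine ⟨u, v, rfl, h0, h1v, ?_⟩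
      rw [f0 u h0, f1 v h1v, singleton_add_Ico']
      congr 1
      omega
    · have h0v : c v = 0 := by
        rcases fin2 (c v) with h | h
        · exact h
        · exact absurd (h1.trans h.symm) hne
      refine ⟨v, u, Sym2.eq_swap, h0v, h1, ?_⟩
      rw [add_comm, f0 v h0v, f1 u h1, singleton_add_Ico']
      congr 1
      omega
  refine ⟨f, ⟨⟨?_, ?_, ?_⟩, ?_⟩, ?_⟩
  · -- injectivity of f
    intro a b hab
    rcases fin2 (c a) with ha | ha <;> rcases fin2 (c b) with hb | hb
    · rw [f0 a ha, f0 b hb] at hab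
      have : ι a + 1 = ι b + 1 := Finset.singleton_injective hab
      exact hιinj (by omega)
    · exfalso
      rw [f0 a ha, f1 b hb] at hab
      have : ι a + 1 ∈ Finset.Ico (N * (ι b + 1)) (N * (ι b + 1) + k) := by
        rw [← hab]; exact Finset.mem_singleton_self _
      rw [Finset.mem_Ico] at this
      have := hNle b
      have := hιlt a
      omega
    · exfalso
      rw [f1 a ha, f0 b hb] at hab
      have : ι b + 1 ∈ Finset.Ico (N * (ι a + 1)) (N * (ι a + 1) + k) := by
        rw [hab]; exact Finset.mem_singleton_self _
      rw [Finset.mem_Ico] at this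
      have := hNle a
      have := hιlt b
      omega
    · rw [f1 a ha, f1 b hb] at hab
      have h := ico_eq_ico' hk hab
      have : ι a + 1 = ι b + 1 := Nat.eq_of_mul_eq_mul_left hNpos h
      exact hιinj (by omega)
  · -- nonempty
    intro v
    rcases fin2 (c v) with h | h
    · rw [f0 v h]; exact Finset.singleton_nonempty _
    · rw [f1 v h]; exact Finset.nonempty_Ico.2 (by omega)
  · -- edge injectivity
    intro e₁ he₁ e₂ he₂ heq
    induction e₁ using Sym2.ind with | _ u₁ v₁ => ?_
    induction e₂ using Sym2.ind with | _ u₂ v₂ => ?_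
    rw [SimpleGraph.mem_edgeSet] at he₁ he₂
    obtain ⟨a₁, b₁, hE₁, ha₁, hb₁, hsum₁⟩ := key u₁ v₁ he₁
    obtain ⟨a₂, b₂, hE₂, ha₂, hb₂, hsum₂⟩ := key u₂ v₂ he₂
    simp only [edgeSum, Sym2.lift_mk] at heq
    rw [hsum₁, hsum₂] at heq
    have hstart := ico_eq_ico' hk heq
    obtain ⟨hA, hB⟩ := decode' (hιlt a₁) (hιlt a₂) hstart
    have haa : a₁ = a₂ := hιinj (by omega)
    have hbb : b₁ = b₂ := hιinj (by omega)
    rw [hE₁, hE₂, haa, hbb]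
  · -- uniform card
    intro u v huv
    obtain ⟨a, b, _, _, _, hsum⟩ := key u v huv
    rw [hsum, Nat.card_Ico]
    omega
  · -- weakly
    intro v
    rcases fin2 (c v) with h | h
    · left; rw [f0 v h]; exact Finset.card_singleton _
    · right; rw [f1 v h, Nat.card_Ico]; omega
end

section
/- For any integer k > 1, a finite simple graph G admits a weakly k-uniform integer additive set-indexer if and only if G is bipartite. -/
open Pointwise

lemma pow_add_pow_inj_aux {N i j i' j' : ℕ} (hN : 2 ≤ N) (hij : i < j) (hij' : i' < j')
    (h : N ^ i + N ^ j = N ^ i' + N ^ j') : i = i' ∧ j = j' := by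
  have hN1 : 1 < N := hN
  have key : ∀ a b : ℕ, a < b → N ^ a + N ^ b < N ^ (b + 1) := by
    intro a b hab
    calc N ^ a + N ^ b < N ^ b + N ^ b := by
          have := Nat.pow_lt_pow_right hN1 hab
          omega
      _ = 2 * N ^ b := by ring
      _ ≤ N * N ^ b := Nat.mul_le_mul_right _ hN
      _ = N ^ (b + 1) := by ring
  have hj : j = j' := by
    by_contra hne
    rcases Nat.lt_or_ge j j' with hlt | hge
    · have h1 : N ^ i + N ^ j < N ^ (j + 1) := key i j hij
      have h2 : N ^ j' ≤ N ^ i' + N ^ j' := Nat.le_add_left _ _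
      have h3 : N ^ (j + 1) ≤ N ^ j' := Nat.pow_le_pow_right (by omega) hlt
      omega
    · have hlt : j' < j := by omega
      have h1 : N ^ i' + N ^ j' < N ^ (j' + 1) := key i' j' hij'
      have h2 : N ^ j ≤ N ^ i + N ^ j := Nat.le_add_left _ _
      have h3 : N ^ (j' + 1) ≤ N ^ j := Nat.pow_le_pow_right (by omega) hlt
      omega
  subst hj
  have : N ^ i = N ^ i' := by omega
  exact ⟨Nat.pow_right_injective hN this, rfl⟩

lemma pow_add_pow_inj {N i j i' j' : ℕ} (hN : 2 ≤ N) (hij : i ≠ j) (hij' : i' ≠ j')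
    (h : N ^ i + N ^ j = N ^ i' + N ^ j') : (i = i' ∧ j = j') ∨ (i = j' ∧ j = i') := by
  rcases Nat.lt_or_ge i j with h1 | h1 <;> rcases Nat.lt_or_ge i' j' with h2 | h2
  · exact Or.inl (pow_add_pow_inj_aux hN h1 h2 h)
  · have h2' : j' < i' := by omega
    have := pow_add_pow_inj_aux hN h1 h2' (by omega)
    exact Or.inr ⟨this.1, this.2⟩
  · have h1' : j < i := by omega
    have := pow_add_pow_inj_aux hN h1' h2 (by omega)
    exact Or.inr ⟨this.2, this.1⟩
  · have h1' : j < i := by omega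
    have h2' : j' < i' := by omega
    have := pow_add_pow_inj_aux hN h1' h2' (by omega)
    exact Or.inl ⟨this.2, this.1⟩

theorem weakly_uniform_IASI_iff_bipartite {V : Type*} [Fintype V] (G : SimpleGraph V)
    (k : ℕ) (hk : 1 < k) :
    (∃ f : V → Finset ℕ, IsWeaklyUniformIASI G f k) ↔ G.Colorable 2 := by
  constructor
  · rintro ⟨f, ⟨⟨⟨hinj, hne, hedge⟩, hcard⟩, hvert⟩⟩
    refine ⟨SimpleGraph.Coloring.mk (fun v => if (f v).card = 1 then 0 else 1) ?_⟩
    intro u v huv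
    have hsum : (f u + f v).card = k := hcard u v huv
    rcases hvert u with hu | hu <;> rcases hvert v with hv | hv
    · -- both singletons: card (f u + f v) ≤ 1 < k
      exfalso
      have : (f u + f v).card ≤ (f u).card * (f v).card := Finset.card_add_le
      rw [hu, hv] at this
      omega
    · show (if (f u).card = 1 then (0 : Fin 2) else 1) ≠ (if (f v).card = 1 then 0 else 1)
      rw [if_pos hu, if_neg (by omega)]
      simp
    · show (if (f u).card = 1 then (0 : Fin 2) else 1) ≠ (if (f v).card = 1 then 0 else 1)
      rw [if_neg (by omega), if_pos hv]
      simp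
    · -- both k-sets: card ≥ 2k - 1 > k
      exfalso
      have := cauchy_davenport_add_of_linearOrder_isCancelAdd (hne u) (hne v)
      omega
  · rintro ⟨C⟩
    set e := Fintype.equivFin V with he
    set N := k + 2 with hNdef
    have hN : 2 ≤ N := by omega
    set ι : V → ℕ := fun v => (e v : ℕ) with hι
    have hιinj : Function.Injective ι := fun a b h => e.injective (Fin.ext h)
    set f : V → Finset ℕ := fun v =>
      if C v = 0 then {N ^ ι v} else Finset.Ico (N ^ ι v) (N ^ ι v + k) with hf
    -- basic facts about f
    have hmem : ∀ v, N ^ ι v ∈ f v := by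
      intro v
      by_cases h : C v = 0 <;> simp [hf, h, Finset.mem_Ico]; omega
    have hlb : ∀ v, ∀ x ∈ f v, N ^ ι v ≤ x := by
      intro v x hx
      by_cases h : C v = 0 <;> simp [hf, h, Finset.mem_Ico] at hx <;> omega
    have hfcard : ∀ v, (f v).card = 1 ∨ (f v).card = k := by
      intro v
      by_cases h : C v = 0 <;> simp [hf, h]
    -- sum over an edge
    have hsum : ∀ u v, G.Adj u v → ∃ i j, i ≠ j ∧ (C u = 0 ∧ i = ι u ∧ j = ι v ∨
        C v = 0 ∧ i = ι v ∧ j = ι u) ∧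
        f u + f v = Finset.Ico (N ^ i + N ^ j) (N ^ i + N ^ j + k) := by
      intro u v huv
      have hCuv : C u ≠ C v := C.valid huv
      have key : ∀ a b : V, C a = 0 → C b ≠ 0 →
          f a + f b = Finset.Ico (N ^ ι a + N ^ ι b) (N ^ ι a + N ^ ι b + k) := by
        intro a b ha hb
        have : f a + f b = ({N ^ ι a} : Finset ℕ) + Finset.Ico (N ^ ι b) (N ^ ι b + k) := by
          simp [hf, ha, hb]
        rw [this]
        ext x
        simp only [Finset.mem_add, Finset.mem_singleton, Finset.mem_Ico]
        constructor
        · rintro ⟨y, rfl, z, hz, rfl⟩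
          omega
        · intro hx
          exact ⟨_, rfl, x - N ^ ι a, by omega, by omega⟩
      by_cases hCu : C u = 0
      · have hCv : C v ≠ 0 := fun h => hCuv (by rw [hCu, h])
        exact ⟨ι u, ι v, fun h => G.ne_of_adj huv (hιinj h),
          Or.inl ⟨hCu, rfl, rfl⟩, key u v hCu hCv⟩
      · have hCv : C v = 0 := by omega
        refine ⟨ι v, ι u, fun h => G.ne_of_adj huv (hιinj h).symm,
          Or.inr ⟨hCv, rfl, rfl⟩, ?_⟩
        rw [add_comm (f u)]
        exact key v u hCv hCu
    refine ⟨f, ⟨⟨⟨?_, ?_, ?_⟩, ?_⟩, hfcard⟩⟩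
    · -- injective
      intro a b hab
      have h1 := hlb b (N ^ ι a) (hab ▸ hmem a)
      have h2 := hlb a (N ^ ι b) (hab ▸ hmem b)
      have : N ^ ι a = N ^ ι b := le_antisymm h2 h1
      exact hιinj (Nat.pow_right_injective hN this)
    · -- nonempty
      intro v
      exact ⟨_, hmem v⟩
    · -- edge injectivity
      intro e₁ he₁ e₂ he₂ hsum12
      induction e₁ using Sym2.ind with | _ u v =>
      induction e₂ using Sym2.ind with | _ u' v' =>
      rw [SimpleGraph.mem_edgeSet] at he₁ he₂
      obtain ⟨i, j, hij, hcase, hval⟩ := hsum u v he₁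
      obtain ⟨i', j', hij', hcase', hval'⟩ := hsum u' v' he₂
      have hes : edgeSum f s(u, v) = f u + f v := rfl
      have hes' : edgeSum f s(u', v') = f u' + f v' := rfl
      rw [hes, hes', hval, hval'] at hsum12
      -- equal Icos of positive length have equal left endpoints
      have hA : N ^ i + N ^ j = N ^ i' + N ^ j' := by
        have hm : N ^ i + N ^ j ∈ Finset.Ico (N ^ i + N ^ j) (N ^ i + N ^ j + k) := by
          simp only [Finset.mem_Ico]
          omega
        have hm' : N ^ i' + N ^ j' ∈ Finset.Ico (N ^ i' + N ^ j') (N ^ i' + N ^ j' + k) := by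
          simp only [Finset.mem_Ico]
          omega
        rw [hsum12] at hm
        rw [← hsum12] at hm'
        simp only [Finset.mem_Ico] at hm hm'
        omega
      have hpair := pow_add_pow_inj hN hij hij' hA
      have hC0 : ∀ a b : V, C a = 0 → C b ≠ 0 → ι a ≠ ι b := by
        intro a b ha hb h
        exact hb (hιinj h ▸ ha)
      -- resolve case analysis
      have hCuv : C u ≠ C v := C.valid he₁
      have hCuv' : C u' ≠ C v' := C.valid he₂
      rw [Sym2.eq_iff]
      rcases hcase with ⟨hCu, hi, hj⟩ | ⟨hCv, hi, hj⟩ <;>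
        rcases hcase' with ⟨hCu', hi', hj'⟩ | ⟨hCv', hi', hj'⟩ <;>
        subst hi <;> subst hj <;> subst hi' <;> subst hj' <;>
        rcases hpair with ⟨h1, h2⟩ | ⟨h1, h2⟩
      · exact Or.inl ⟨hιinj h1, hιinj h2⟩
      · exact absurd h1 (hC0 u v' hCu (fun h => hCuv' (by rw [hCu', h])))
      · exact Or.inr ⟨hιinj h1, hιinj h2⟩
      · exact Or.inl ⟨hιinj h1, hιinj h2⟩
      · exact Or.inr ⟨hιinj h2, hιinj h1⟩
      · exact Or.inl ⟨hιinj h2, hιinj h1⟩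
      · exact Or.inl ⟨hιinj h2, hιinj h1⟩
      · exact absurd h1 (hC0 v u' hCv (fun h => hCuv' (by rw [h, hCv'])))
    · -- uniform card
      intro u v huv
      obtain ⟨i, j, hij, hcase, hval⟩ := hsum u v huv
      rw [hval]
      simp
end

section
/- For every positive integer k, every finite bipartite graph admits a k-uniform integer additive set-indexer. -/
open Pointwise

lemma two_pow_aux {i j i' j' : ℕ} (h1 : i < j) (h2 : i' < j')
    (h : 2 ^ i + 2 ^ j = 2 ^ i' + 2 ^ j') : j ≤ j' := by
  by_contra hc
  push_neg at hc
  have hij' : (2:ℕ) ^ i' < 2 ^ j' := Nat.pow_lt_pow_right one_lt_two h2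
  have h3 : (2:ℕ) ^ i' + 2 ^ j' < 2 ^ (j' + 1) := by
    have : (2:ℕ) ^ (j' + 1) = 2 ^ j' + 2 ^ j' := by ring
    omega
  have h4 : (2:ℕ) ^ (j' + 1) ≤ 2 ^ j := Nat.pow_le_pow_right (by norm_num) hc
  have h5 : (2:ℕ) ^ j ≤ 2 ^ i + 2 ^ j := le_add_self
  omega

lemma two_pow_eq {i j i' j' : ℕ} (h1 : i < j) (h2 : i' < j')
    (h : 2 ^ i + 2 ^ j = 2 ^ i' + 2 ^ j') : i = i' ∧ j = j' := by
  have hj : j = j' := le_antisymm (two_pow_aux h1 h2 h) (two_pow_aux h2 h1 h.symm)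
  subst hj
  have : (2:ℕ) ^ i = 2 ^ i' := by omega
  exact ⟨Nat.pow_right_injective (le_refl 2) this, rfl⟩

lemma two_pow_unordered {i j i' j' : ℕ} (h1 : i ≠ j) (h2 : i' ≠ j')
    (h : 2 ^ i + 2 ^ j = 2 ^ i' + 2 ^ j') :
    (i = i' ∧ j = j') ∨ (i = j' ∧ j = i') := by
  rcases h1.lt_or_gt with hij | hij <;> rcases h2.lt_or_gt with hij' | hij'
  · exact Or.inl (two_pow_eq hij hij' h)
  · obtain ⟨a, b⟩ := two_pow_eq hij hij' (by omega)
    exact Or.inr ⟨a, b⟩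
  · obtain ⟨a, b⟩ := two_pow_eq hij hij' (by omega)
    exact Or.inr ⟨b, a⟩
  · obtain ⟨a, b⟩ := two_pow_eq hij hij' (by omega)
    exact Or.inl ⟨b, a⟩

theorem bipartite_uniform_IASI {V : Type*} [Fintype V] (G : SimpleGraph V)
    (hG : G.Colorable 2) (k : ℕ) (hk : 0 < k) :
    ∃ f : V → Finset ℕ, IsUniformIASI G f k := by
  classical
  obtain ⟨c⟩ := hG
  set idx : V → ℕ := fun v => ((Fintype.equivFin V) v : ℕ) with hidx
  have idx_inj : Function.Injective idx := fun u v h => by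
    exact (Fintype.equivFin V).injective (Fin.ext h)
  set m : V → ℕ := fun v => if c v = 0 then 1 else k with hm'
  have hm : ∀ v, 0 < m v := fun v => by
    by_cases h : c v = 0 <;> simp [hm', h, hk]
  set f : V → Finset ℕ := fun v =>
    (Finset.range (m v)).image (fun t => 2 ^ idx v + t) with hf
  have hmem : ∀ v x, x ∈ f v ↔ ∃ t < m v, x = 2 ^ idx v + t := by
    intro v x
    simp [hf, eq_comm]
  have hbase : ∀ v, 2 ^ idx v ∈ f v := fun v => (hmem v _).2 ⟨0, hm v, by ring⟩
  have hle : ∀ v x, x ∈ f v → 2 ^ idx v ≤ x := by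
    intro v x hx
    obtain ⟨t, _, rfl⟩ := (hmem v x).1 hx
    omega
  have hcard : ∀ v, (f v).card = m v := by
    intro v
    rw [hf]
    rw [Finset.card_image_of_injective _ (add_right_injective _), Finset.card_range]
  have fin2 : ∀ x : Fin 2, x = 0 ∨ x = 1 := by decide
  -- base element of sumset
  have hsbase : ∀ u v, 2 ^ idx u + 2 ^ idx v ∈ f u + f v := fun u v =>
    Finset.add_mem_add (hbase u) (hbase v)
  have hsle : ∀ u v x, x ∈ f u + f v → 2 ^ idx u + 2 ^ idx v ≤ x := by
    intro u v x hx
    obtain ⟨a, ha, b, hb, rfl⟩ := Finset.mem_add.1 hx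
    exact Nat.add_le_add (hle u a ha) (hle v b hb)
  -- card of sumset on edges
  have hsing : ∀ v, c v = 0 → f v = {2 ^ idx v} := by
    intro v hv
    rw [hf]
    simp [hm', hv, Finset.range_one]
  have hcardsum : ∀ u v, G.Adj u v → (f u + f v).card = k
  · intro u v huv
    have hne := c.valid huv
    rcases fin2 (c u) with hu | hu
    · have hv : c v ≠ 0 := by rw [hu] at hne; exact fun h => hne h.symm
      rw [hsing u hu, Finset.singleton_add, Finset.vadd_finset_def]
      simp only [vadd_eq_add]
      rw [Finset.card_image_of_injective _ (add_right_injective _), hcard]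
      simp [hm', hv]
    · have hu0 : c u ≠ 0 := by rw [hu]; exact fun h => absurd h (by decide)
      have hv : c v = 0 := by rcases fin2 (c v) with h | h; exact h; rw [hu, h] at hne; exact absurd rfl hne
      rw [add_comm, hsing v hv, Finset.singleton_add, Finset.vadd_finset_def]
      simp only [vadd_eq_add]
      rw [Finset.card_image_of_injective _ (add_right_injective _), hcard]
      simp [hm', hu0]
  refine ⟨f, ⟨⟨?_, fun v => ⟨_, hbase v⟩, ?_⟩, hcardsum⟩⟩
  · -- injectivity of f
    intro u v h
    have h1 := hle v _ (h ▸ hbase u)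
    have h2 := hle u _ (h.symm ▸ hbase v)
    have : idx u = idx v :=
      Nat.pow_right_injective (le_refl 2) (le_antisymm h2 h1)
    exact idx_inj this
  · -- edge injectivity
    intro e₁ he₁ e₂ he₂ heq
    induction e₁ using Sym2.ind with
    | _ u₁ v₁ =>
    induction e₂ using Sym2.ind with
    | _ u₂ v₂ =>
    rw [SimpleGraph.mem_edgeSet] at he₁ he₂
    have heq' : f u₁ + f v₁ = f u₂ + f v₂ := by
      simpa [edgeSum] using heq
    have hmin : 2 ^ idx u₁ + 2 ^ idx v₁ = 2 ^ idx u₂ + 2 ^ idx v₂ := by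
      have a1 := hsle u₂ v₂ _ (heq' ▸ hsbase u₁ v₁)
      have a2 := hsle u₁ v₁ _ (heq'.symm ▸ hsbase u₂ v₂)
      omega
    have hne₁ : idx u₁ ≠ idx v₁ := fun h => he₁.ne (idx_inj h)
    have hne₂ : idx u₂ ≠ idx v₂ := fun h => he₂.ne (idx_inj h)
    rcases two_pow_unordered hne₁ hne₂ hmin with ⟨a, b⟩ | ⟨a, b⟩
    · rw [Sym2.eq_iff]
      exact Or.inl ⟨idx_inj a, idx_inj b⟩
    · rw [Sym2.eq_iff]
      exact Or.inr ⟨idx_inj a, idx_inj b⟩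
end

section
/- For k > 1, the complete graph K_n with n > 2 does not admit a weakly k-uniform integer additive set-indexer. -/
open Pointwise

theorem complete_no_weakly_uniform_IASI (n : ℕ) (hn : 2 < n) (k : ℕ) (hk : 1 < k) :
    ¬ ∃ f : Fin n → Finset ℕ, IsWeaklyUniformIASI (⊤ : SimpleGraph (Fin n)) f k := by
  rintro ⟨f, ⟨⟨hinj, hne, -⟩, hunif⟩, hcard⟩
  -- every edge has one singleton and one k-set; specifically, adjacent vertices
  -- cannot have equal card types
  have key : ∀ u v : Fin n, u ≠ v → (f u).card ≠ (f v).card := by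
    intro u v huv heq
    have hadj : (⊤ : SimpleGraph (Fin n)).Adj u v := huv
    have hk' := hunif u v hadj
    rcases hcard u with h1 | h1
    · -- both singletons
      rw [heq] at h1
      have h2 : (f u).card = 1 := heq ▸ h1
      have := Finset.card_add_le (s := f u) (t := f v)
      rw [hk', h2, h1] at this
      omega
    · have h2 : (f v).card = k := heq ▸ h1
      have := cauchy_davenport_add_of_linearOrder_isCancelAdd (hne u) (hne v)
      rw [hk', h1, h2] at this
      omega
  have h01 : (⟨0, by omega⟩ : Fin n) ≠ ⟨1, by omega⟩ := by simp [Fin.ext_iff]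
  have h02 : (⟨0, by omega⟩ : Fin n) ≠ ⟨2, by omega⟩ := by simp [Fin.ext_iff]
  have h12 : (⟨1, by omega⟩ : Fin n) ≠ ⟨2, by omega⟩ := by simp [Fin.ext_iff]
  have k0 := key _ _ h01
  have k1 := key _ _ h02
  have k2 := key _ _ h12
  rcases hcard ⟨0, by omega⟩ with a | a <;> rcases hcard ⟨1, by omega⟩ with b | b <;>
    rcases hcard ⟨2, by omega⟩ with c | c <;> omega
end

section
/- For every positive odd integer k, the complete graph K_n admits a k-uniform integer additive set-indexer. -/
open Pointwise

lemma ap_add_ap (A B m : ℕ) (hm : 0 < m) :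
    ((Finset.range m).image (A + ·)) + ((Finset.range m).image (B + ·)) =
      (Finset.range (2*m-1)).image ((A+B) + ·) := by
  ext x
  simp only [Finset.mem_add, Finset.mem_image, Finset.mem_range]
  constructor
  · rintro ⟨y, ⟨s, hs, rfl⟩, z, ⟨t, ht, rfl⟩, rfl⟩
    exact ⟨s + t, by omega, by omega⟩
  · rintro ⟨u, hu, rfl⟩
    exact ⟨A + min u (m-1), ⟨min u (m-1), by omega, rfl⟩,
      B + (u - min u (m-1)), ⟨u - min u (m-1), by omega, rfl⟩, by omega⟩

lemma two_le_two_pow {e : ℕ} (he : 0 < e) : (2:ℕ) ≤ 2^e := by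
  calc (2:ℕ) = 2^1 := by norm_num
  _ ≤ 2^e := Nat.pow_le_pow_right (by omega) he

lemma sidon_two_pow_le : ∀ a b c d : ℕ, a ≤ b → c ≤ d →
    2^a + 2^b = 2^c + 2^d → a = c ∧ b = d := by
  intro a
  induction a with
  | zero =>
    intro b c d hab hcd h
    match c with
    | 0 =>
      simp only [pow_zero] at h
      have := Nat.pow_right_injective (le_refl 2) (show (2:ℕ)^b = 2^d by omega)
      omega
    | c + 1 =>
      exfalso
      have h2c : 2 ∣ 2^(c+1) := dvd_pow_self 2 (by omega)
      have h2d : 2 ∣ 2^d := dvd_pow_self 2 (by omega)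
      have h2c' := two_le_two_pow (show 0 < c + 1 by omega)
      have h2d' := two_le_two_pow (show 0 < d by omega)
      match b with
      | 0 => simp only [pow_zero] at h; omega
      | b + 1 =>
        have h2b : 2 ∣ 2^(b+1) := dvd_pow_self 2 (by omega)
        simp only [pow_zero] at h
        omega
  | succ a ih =>
    intro b c d hab hcd h
    match c with
    | 0 =>
      exfalso
      have h2a : 2 ∣ 2^(a+1) := dvd_pow_self 2 (by omega)
      have h2b : 2 ∣ 2^b := dvd_pow_self 2 (by omega)
      have h2a' := two_le_two_pow (show 0 < a + 1 by omega)
      have hb0 : 0 < 2^b := Nat.pow_pos (by omega)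
      match d with
      | 0 => simp only [pow_zero] at h; omega
      | d + 1 =>
        have h2d : 2 ∣ 2^(d+1) := dvd_pow_self 2 (by omega)
        simp only [pow_zero] at h
        omega
    | c + 1 =>
      have hb : b = (b - 1) + 1 := by omega
      have hd : d = (d - 1) + 1 := by omega
      rw [hb, hd] at h
      have h' : 2^a + 2^(b-1) = 2^c + 2^(d-1) := by
        simp only [pow_succ] at h
        omega
      have := ih (b-1) c (d-1) (by omega) (by omega) h'
      omega

lemma sidon_two_pow (a b c d : ℕ) (h : 2^a + 2^b = 2^c + 2^d) :
    (a = c ∧ b = d) ∨ (a = d ∧ b = c) := by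
  rcases le_total a b with hab | hab <;> rcases le_total c d with hcd | hcd
  · exact Or.inl (sidon_two_pow_le a b c d hab hcd h)
  · have := sidon_two_pow_le a b d c hab hcd (by omega); omega
  · have := sidon_two_pow_le b a c d hab hcd (by omega); omega
  · have := sidon_two_pow_le b a d c hab hcd (by omega); omega

theorem complete_uniform_IASI_of_odd (n k : ℕ) (hk : Odd k) (hk0 : 0 < k) :
    ∃ f : Fin n → Finset ℕ, IsUniformIASI (⊤ : SimpleGraph (Fin n)) f k := by
  obtain ⟨m', hm'⟩ := hk
  set m : ℕ := m' + 1 with hm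
  have hkm : k = 2 * m - 1 := by omega
  have hm0 : 0 < m := by omega
  refine ⟨fun i => (Finset.range m).image ((2^(i:ℕ)) + ·), ?_, ?_⟩
  · -- IsIASI
    refine ⟨?_, ?_, ?_⟩
    · -- injective
      intro i j hij
      dsimp only at hij
      have h1 : (2:ℕ)^(i:ℕ) ∈ (Finset.range m).image ((2^(j:ℕ)) + ·) := by
        rw [← hij]; exact Finset.mem_image.2 ⟨0, by simpa using hm0, by simp⟩
      have h2 : (2:ℕ)^(j:ℕ) ∈ (Finset.range m).image ((2^(i:ℕ)) + ·) := by
        rw [hij]; exact Finset.mem_image.2 ⟨0, by simpa using hm0, by simp⟩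
      simp only [Finset.mem_image, Finset.mem_range] at h1 h2
      obtain ⟨s, hs, hs'⟩ := h1
      obtain ⟨t, ht, ht'⟩ := h2
      have : (2:ℕ)^(i:ℕ) = 2^(j:ℕ) := by omega
      have := Nat.pow_right_injective (le_refl 2) this
      exact Fin.ext this
    · -- nonempty
      intro v
      exact ⟨2^(v:ℕ), Finset.mem_image.2 ⟨0, by simpa using hm0, by simp⟩⟩
    · -- edge injective
      intro e₁ he₁ e₂ he₂ heq
      induction e₁ using Sym2.ind with
      | _ a b =>
      induction e₂ using Sym2.ind with
      | _ c d =>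
      rw [SimpleGraph.mem_edgeSet] at he₁ he₂
      simp only [edgeSum, Sym2.lift_mk] at heq
      rw [ap_add_ap _ _ _ hm0, ap_add_ap _ _ _ hm0] at heq
      -- extract base sums
      have hmem : ∀ A C : ℕ, (Finset.range (2*m-1)).image (A + ·) =
          (Finset.range (2*m-1)).image (C + ·) → C ≤ A := by
        intro A C hAC
        have : A ∈ (Finset.range (2*m-1)).image (C + ·) := by
          rw [← hAC]; exact Finset.mem_image.2 ⟨0, by simp; omega, by simp⟩
        simp only [Finset.mem_image, Finset.mem_range] at this
        obtain ⟨u, hu, hu'⟩ := this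
        omega
      have h1 := hmem _ _ heq
      have h2 := hmem _ _ heq.symm
      have hbase : (2:ℕ)^(a:ℕ) + 2^(b:ℕ) = 2^(c:ℕ) + 2^(d:ℕ) := by omega
      rcases sidon_two_pow _ _ _ _ hbase with ⟨h3, h4⟩ | ⟨h3, h4⟩
      · rw [Sym2.eq_iff]
        exact Or.inl ⟨Fin.ext h3, Fin.ext h4⟩
      · rw [Sym2.eq_iff]
        exact Or.inr ⟨Fin.ext h3, Fin.ext h4⟩
  · -- uniform
    intro u v _
    rw [ap_add_ap _ _ _ hm0, Finset.card_image_of_injective _ (add_right_injective _),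
      Finset.card_range]
    omega
end

section
/- Every finite simple graph admits a k-uniform integer additive set-indexer for every positive odd integer k. -/
open Pointwise

lemma sidon_helper {a b c d : ℕ} (hab : a < b) (hcd : c < d)
    (h : 2 ^ a + 2 ^ b = 2 ^ c + 2 ^ d) : a = c ∧ b = d := by
  have hbd : b = d := by
    by_contra hne
    rcases Nat.lt_or_ge b d with h1 | h1
    · have h2 : (2:ℕ) ^ a < 2 ^ b := Nat.pow_lt_pow_right one_lt_two hab
      have h3 : (2:ℕ) ^ (b+1) ≤ 2 ^ d := Nat.pow_le_pow_right (by norm_num) h1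
      have h4 : (2:ℕ) ^ (b+1) = 2 ^ b + 2 ^ b := by ring
      have h5 : 0 < (2:ℕ) ^ c := Nat.pow_pos (by norm_num)
      omega
    · have h1' : d < b := lt_of_le_of_ne h1 (fun h => hne h.symm)
      have h2 : (2:ℕ) ^ c < 2 ^ d := Nat.pow_lt_pow_right one_lt_two hcd
      have h3 : (2:ℕ) ^ (d+1) ≤ 2 ^ b := Nat.pow_le_pow_right (by norm_num) h1'
      have h4 : (2:ℕ) ^ (d+1) = 2 ^ d + 2 ^ d := by ring
      have h5 : 0 < (2:ℕ) ^ a := Nat.pow_pos (by norm_num)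
      omega
  subst hbd
  have : (2:ℕ) ^ a = 2 ^ c := by omega
  exact ⟨Nat.pow_right_injective (le_refl 2) this, rfl⟩

lemma pow_sidon {a b c d : ℕ} (hab : a ≠ b) (hcd : c ≠ d)
    (h : 2 ^ a + 2 ^ b = 2 ^ c + 2 ^ d) : (a = c ∧ b = d) ∨ (a = d ∧ b = c) := by
  rcases Nat.lt_or_ge a b with h1 | h1
  · rcases Nat.lt_or_ge c d with h2 | h2
    · exact Or.inl (sidon_helper h1 h2 h)
    · have h2' : d < c := lt_of_le_of_ne h2 (fun h => hcd h.symm)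
      have := sidon_helper h1 h2' (by omega)
      exact Or.inr ⟨this.1, this.2⟩
  · have h1' : b < a := lt_of_le_of_ne h1 (fun h => hab h.symm)
    rcases Nat.lt_or_ge c d with h2 | h2
    · have := sidon_helper h1' h2 (by omega)
      exact Or.inr ⟨this.2, this.1⟩
    · have h2' : d < c := lt_of_le_of_ne h2 (fun h => hcd h.symm)
      have := sidon_helper h1' h2' (by omega)
      exact Or.inl ⟨this.2, this.1⟩

theorem uniform_IASI_of_odd {V : Type*} [Fintype V] (G : SimpleGraph V) (k : ℕ)
    (hk : Odd k) (hk0 : 0 < k) : ∃ f : V → Finset ℕ, IsUniformIASI G f k := by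
  obtain ⟨t, ht⟩ := hk
  set m := t + 1 with hm
  have hkm : k = 2 * m - 1 := by omega
  set i : V → ℕ := fun v => ((Fintype.equivFin V) v : ℕ) with hi
  have hi_inj : Function.Injective i := fun u v h =>
    (Fintype.equivFin V).injective (Fin.ext h)
  set C : V → ℕ := fun v => 2 ^ (i v) with hC
  have hC_inj : Function.Injective C := fun u v h =>
    hi_inj (Nat.pow_right_injective (le_refl 2) h)
  set f : V → Finset ℕ := fun v => (Finset.range m).image (fun j => C v + j) with hf
  have hmemf : ∀ v x, x ∈ f v ↔ ∃ j, j < m ∧ x = C v + j := by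
    intro v x
    simp [hf, eq_comm]
  have hsum : ∀ u v, f u + f v = (Finset.range k).image (fun j => C u + C v + j) := by
    intro u v
    ext x
    simp only [Finset.mem_add, Finset.mem_image, Finset.mem_range, hmemf]
    constructor
    · rintro ⟨y, ⟨j1, hj1, rfl⟩, z, ⟨j2, hj2, rfl⟩, rfl⟩
      exact ⟨j1 + j2, by omega, by ring⟩
    · rintro ⟨j, hj, rfl⟩
      refine ⟨C u + min j (m-1), ⟨min j (m-1), by omega, rfl⟩,
        C v + (j - min j (m-1)), ⟨j - min j (m-1), by omega, rfl⟩, by omega⟩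
  have hCCf : ∀ u v u' v', f u + f v = f u' + f v' → C u + C v = C u' + C v' := by
    intro u v u' v' h
    rw [hsum, hsum] at h
    have h1 : C u + C v ∈ (Finset.range k).image (fun j => C u' + C v' + j) := by
      rw [← h]; exact Finset.mem_image.2 ⟨0, Finset.mem_range.2 hk0, by omega⟩
    have h2 : C u' + C v' ∈ (Finset.range k).image (fun j => C u + C v + j) := by
      rw [h]; exact Finset.mem_image.2 ⟨0, Finset.mem_range.2 hk0, by omega⟩
    simp only [Finset.mem_image, Finset.mem_range] at h1 h2
    obtain ⟨j1, _, e1⟩ := h1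
    obtain ⟨j2, _, e2⟩ := h2
    omega
  refine ⟨f, ⟨⟨?_, ?_, ?_⟩, ?_⟩⟩
  · -- injective
    intro u v h
    have := hCCf u u v v (by rw [h])
    exact hC_inj (by omega)
  · intro v
    exact ⟨C v, (hmemf v _).2 ⟨0, by omega, by omega⟩⟩
  · -- edge injectivity
    intro e₁ he₁ e₂ he₂ hsumeq
    induction e₁ using Sym2.ind with
    | _ u v =>
    induction e₂ using Sym2.ind with
    | _ u' v' =>
    rw [SimpleGraph.mem_edgeSet] at he₁ he₂
    have huv : u ≠ v := he₁.ne
    have huv' : u' ≠ v' := he₂.ne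
    have hCC : C u + C v = C u' + C v' := by
      apply hCCf
      simpa [edgeSum] using hsumeq
    have := pow_sidon (a := i u) (b := i v) (c := i u') (d := i v')
      (fun h => huv (hi_inj h)) (fun h => huv' (hi_inj h)) hCC
    rcases this with ⟨h1, h2⟩ | ⟨h1, h2⟩
    · rw [hi_inj h1, hi_inj h2]
    · rw [hi_inj h1, hi_inj h2, Sym2.eq_swap]
  · intro u v _
    rw [hsum]
    rw [Finset.card_image_of_injective _ (add_right_injective (C u + C v))]
    exact Finset.card_range k
end
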